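/- Let (T, M) be a local domain with residue field k and residue map π : T → k, and let D be an integral domain with fraction field k, viewed as a subring of k. Let S be an overring of D, i.e., a subring of k containing D. If S is flat as a D-module, then the pullback S ×_k T = π⁻¹(S) is flat as a module over D ×_k T = π⁻¹(D). -/

import Mathlib

set_option maxHeartbeats 2000000 in

open TensorProduct in
/-- Flatness of an algebra follows from flatness of its localizations at all
maximal ideals of the algebra. -/
theorem aux_flat_of_max {R A : Type*} [CommRing R] [CommRing A] [Algebra R A]
    (h : ∀ (N : Ideal A) [N.IsPrime], N.IsMaximal → Module.Flat R (Localization.AtPrime N)) :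
    Module.Flat R A := by
  rw [Module.Flat.iff_lTensor_injective']
  intro I
  rw [injective_iff_map_eq_zero]
  intro z hz
  by_contra hz0
  set J : Ideal A := LinearMap.ker (LinearMap.toSpanSingleton A (A ⊗[R] ↥I) z) with hJ
  have hJtop : J ≠ ⊤ := by
    intro htop
    apply hz0
    have h1 : (1 : A) ∈ J := htop ▸ Submodule.mem_top
    rw [hJ, LinearMap.mem_ker, LinearMap.toSpanSingleton_apply, one_smul] at h1
    exact h1
  obtain ⟨N, hNmax, hJN⟩ := Ideal.exists_le_maximal J hJtop
  haveI hNp : N.IsPrime := hNmax.isPrime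
  set L := Localization.AtPrime N with hL
  haveI hflatL : Module.Flat R L := h N hNmax
  -- the natural A-linear map `A ⊗[R] I → L ⊗[R] I`
  set gN : (A ⊗[R] ↥I) →ₗ[A] (L ⊗[R] ↥I) :=
    TensorProduct.AlgebraTensorModule.map (Algebra.linearMap A L) (LinearMap.id) with hgN
  -- commutation with multiplication maps
  have hcomm : ∀ w : A ⊗[R] ↥I,
      LinearMap.lTensor L I.subtype (gN w) =
      TensorProduct.AlgebraTensorModule.map (Algebra.linearMap A L)
        (LinearMap.id : R →ₗ[R] R) (LinearMap.lTensor A I.subtype w) := by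
    intro w
    induction w using TensorProduct.induction_on with
    | zero => simp
    | tmul a i => simp [hgN]
    | add x y hx hy => simp [map_add, hx, hy]
  have hginj : Function.Injective (LinearMap.lTensor L I.subtype) :=
    (Module.Flat.iff_lTensor_injective' (R := R) (M := L)).mp hflatL I
  have hgz : gN z = 0 := by
    apply hginj
    rw [hcomm z, hz]
    simp
  -- `gN` is the localization map at `N.primeCompl`
  haveI hbc0 : IsLocalizedModule N.primeCompl
      (TensorProduct.mk A L (A ⊗[R] ↥I) 1) :=
    (isLocalizedModule_iff_isBaseChange N.primeCompl L _).mpr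
      (TensorProduct.isBaseChange A (A ⊗[R] ↥I) L)
  let e : (L ⊗[A] (A ⊗[R] ↥I)) ≃ₗ[A] (L ⊗[R] ↥I) :=
    (TensorProduct.AlgebraTensorModule.cancelBaseChange R A L L ↥I).restrictScalars A
  haveI hlm : IsLocalizedModule N.primeCompl
      (e.toLinearMap ∘ₗ (TensorProduct.mk A L (A ⊗[R] ↥I) 1)) :=
    IsLocalizedModule.of_linearEquiv N.primeCompl _ _
  have hge : gN = e.toLinearMap ∘ₗ (TensorProduct.mk A L (A ⊗[R] ↥I) 1) := by
    apply LinearMap.restrictScalars_injective R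
    apply TensorProduct.ext'
    intro a i
    simp [hgN, e, TensorProduct.AlgebraTensorModule.cancelBaseChange_tmul,
      Algebra.algebraMap_eq_smul_one, TensorProduct.smul_tmul']
  rw [hge] at hgz
  obtain ⟨c, hc⟩ := hlm.exists_of_eq (x₁ := z) (x₂ := 0) (by rw [map_zero]; exact hgz)
  have hcz : (c : A) • z = 0 := by
    rw [← Submonoid.smul_def, hc, smul_zero]
  have hcJ : (c : A) ∈ J := by
    rw [hJ, LinearMap.mem_ker, LinearMap.toSpanSingleton_apply]
    exact hcz
  exact c.2 (hJN hcJ)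

set_option maxHeartbeats 1000000 in
theorem stmt_9 {T k : Type*} [CommRing T] [IsDomain T] [IsLocalRing T] [Field k]
    (π : T →+* k) (hπ : Function.Surjective π)
    (hker : RingHom.ker π = IsLocalRing.maximalIdeal T)
    (D : Subring k) [IsFractionRing D k]
    (S : Subring k) (hDS : D ≤ S)
    (hflat : @Module.Flat D S _ _ (RingHom.toAlgebra (Subring.inclusion hDS)).toModule) :
    @Module.Flat (D.comap π) (S.comap π) _ _
      (RingHom.toAlgebra
        (Subring.inclusion (fun _ hx => hDS hx : D.comap π ≤ S.comap π))).toModule := by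
  classical
  set R := D.comap π with hRdef
  set A := S.comap π with hAdef
  have hRA : R ≤ A := fun x hx => hDS hx
  letI : Algebra ↥R ↥A := (Subring.inclusion hRA).toAlgebra
  letI : Algebra ↥D ↥S := (Subring.inclusion hDS).toAlgebra
  haveI hflatDS : Module.Flat ↥D ↥S := hflat
  -- units of `T` are detected by `π`
  have hunit : ∀ t : T, π t ≠ 0 → IsUnit t := by
    intro t ht
    by_contra hu
    apply ht
    have h1 : t ∈ IsLocalRing.maximalIdeal T :=
      (IsLocalRing.mem_maximalIdeal t).mpr (mem_nonunits_iff.mpr hu)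
    rw [← hker] at h1
    exact h1
  -- the residue map `A → S`
  set sπ : ↥A →+* ↥S := (π.comp A.subtype).codRestrict S (fun a => a.2) with hsπ
  have hsπval : ∀ a : ↥A, (sπ a : k) = π (a : T) := fun a => rfl
  have hsπsurj : Function.Surjective sπ := by
    rintro ⟨s, hs⟩
    obtain ⟨t, ht⟩ := hπ s
    exact ⟨⟨t, show t ∈ A from by simp [hAdef, Subring.mem_comap, ht, hs]⟩,
      Subtype.ext (by simpa [hsπval] using ht)⟩
  -- every maximal ideal of `A` contains the kernel of `π`
  have hMN : ∀ (N : Ideal ↥A), N.IsMaximal → ∀ a : ↥A, π (a : T) = 0 → a ∈ N := by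
    intro N hN a ha
    by_contra hnot
    obtain ⟨y, i, hiN, hyi⟩ := hN.exists_inv hnot
    have hπi : π (i : T) = 1 := by
      have h1 : ((y * a + i : ↥A) : T) = 1 := by rw [hyi]; rfl
      have := congrArg π h1
      simpa [ha] using this
    obtain ⟨u, hu⟩ := hunit (i : T) (by rw [hπi]; exact one_ne_zero)
    have hπinv : π (↑u⁻¹ : T) = 1 := by
      have h1 : π ((↑u⁻¹ : T) * (↑u : T)) = 1 := by
        rw [← Units.val_mul, inv_mul_cancel, Units.val_one]; exact map_one π
      rwa [map_mul, hu, hπi, mul_one] at h1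
    have hinvA : (↑u⁻¹ : T) ∈ A := by
      simp [hAdef, Subring.mem_comap, hπinv, one_mem]
    have hiunit : IsUnit i := by
      refine IsUnit.of_mul_eq_one (a := i) ⟨(↑u⁻¹ : T), hinvA⟩ (Subtype.ext ?_)
      show (i : T) * (↑u⁻¹ : T) = 1
      rw [← hu, Units.mul_inv]
    exact hN.ne_top (N.eq_top_of_isUnit_mem hiN hiunit)
  -- main step: localizations of `A` at its maximal ideals are localizations of `R`
  have key : ∀ (N : Ideal ↥A) [N.IsPrime], N.IsMaximal →
      Module.Flat ↥R (Localization.AtPrime N) := by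
    intro N hNp hNmax
    set q : Ideal ↥R := N.comap (algebraMap ↥R ↥A) with hqdef
    haveI hqp : q.IsPrime := Ideal.IsPrime.comap _
    have halg : ∀ r : ↥R, algebraMap ↥R ↥A r = Subring.inclusion hRA r := fun r => rfl
    have hALunits : ∀ a : ↥A, a ∉ N → IsUnit (algebraMap ↥A (Localization.AtPrime N) a) :=
      fun a ha => IsLocalization.map_units (Localization.AtPrime N) (⟨a, ha⟩ : N.primeCompl)
    have halgRL : ∀ r : ↥R, algebraMap ↥R (Localization.AtPrime N) r = algebraMap ↥A (Localization.AtPrime N) (Subring.inclusion hRA r) := by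
      intro r
      rw [IsScalarTower.algebraMap_eq ↥R ↥A (Localization.AtPrime N)]
      rfl
    -- `N̄ = π(N)` as an ideal of `S`
    set Nb : Ideal ↥S := N.map sπ with hNb
    have hNbmem : ∀ a : ↥A, a ∈ N → sπ a ∈ Nb := fun a ha => Ideal.mem_map_of_mem sπ ha
    have hNbmem' : ∀ s : ↥S, s ∈ Nb → ∀ a : ↥A, sπ a = s → a ∈ N := by
      intro s hs a has
      obtain ⟨x, hxN, hxs⟩ := (Ideal.mem_map_iff_of_surjective sπ hsπsurj).mp hs
      have hdiff : π ((a - x : ↥A) : T) = 0 := by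
        have : (sπ (a - x) : k) = 0 := by rw [map_sub, has, hxs, sub_self]; rfl
        simpa [hsπval] using this
      have : a - x ∈ N := hMN N hNmax _ hdiff
      simpa using N.add_mem this hxN
    -- key: `IsLocalization q.primeCompl (Localization.AtPrime N)`
    haveI hIsLoc : IsLocalization q.primeCompl (Localization.AtPrime N) := by
      constructor
      constructor
      · rintro ⟨r, hr⟩
        rw [halgRL]
        exact hALunits _ (by simpa [hqdef, Ideal.primeCompl, halg] using hr)
      · -- surjectivity of fractions: the pullback argument
        intro z
        obtain ⟨⟨a, ⟨w, hw⟩⟩, hmk⟩ := IsLocalization.mk'_surjective N.primeCompl z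
        have hπw0 : π (w : T) ≠ 0 := fun h0 => hw (hMN N hNmax w h0)
        -- write `π a / π w` as a fraction over `D`
        obtain ⟨b, c, hcnz, hbc⟩ :=
          IsFractionRing.div_surjective (A := ↥D) (π (a : T) / π (w : T))
        have hcoeD : ∀ d : ↥D, algebraMap ↥D k d = (d : k) := fun d => rfl
        have hc0 : (c : k) ≠ 0 := by
          intro h0
          have : c = 0 := Subtype.ext h0
          rw [this] at hcnz
          exact zero_notMem_nonZeroDivisors hcnz
        have hkey0 : (c : k) * π (a : T) = (b : k) * π (w : T) := by
          rw [hcoeD, hcoeD, div_eq_div_iff hc0 hπw0] at hbc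
          linear_combination -hbc
        -- the relation `c • (π a) - b • (π w) = 0` in `S`
        set xs : ↥S := sπ a with hxs
        set ys : ↥S := sπ w with hys
        have hrelS : c • xs + (-b) • ys = 0 := by
          apply Subtype.ext
          have h1 : ((c • xs + (-b) • ys : ↥S) : k)
              = (c : k) * (xs : k) + (-(b : k)) * (ys : k) := by
            push_cast [Algebra.smul_def]
            rfl
          rw [h1]
          have hxsv : (xs : k) = π (a : T) := rfl
          have hysv : (ys : k) = π (w : T) := rfl
          rw [hxsv, hysv]
          simp only [Subring.coe_zero]
          linear_combination hkey0
        -- apply the equational criterion for flatness of `S` over `D`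
        set f : ULift.{0} (Fin 2) → ↥D := fun i => if i.down = 0 then c else -b with hf
        set v : ULift.{0} (Fin 2) → ↥S := fun i => if i.down = 0 then xs else ys with hv
        have hsum : ∑ i, f i • v i = 0 := by
          have h2 : ∑ i : ULift (Fin 2), f i • v i
              = ∑ i : Fin 2, f ⟨i⟩ • v ⟨i⟩ :=
            (Equiv.ulift.symm.sum_comp fun i => f i • v i).symm
          rw [h2, Fin.sum_univ_two]
          simpa [hf, hv] using hrelS
        obtain ⟨κ, Cm, yv, hvv, hrel2⟩ :=
          Module.Flat.isTrivialRelation_of_sum_smul_eq_zero (R := ↥D) (M := ↥S) (f := f) (x := v) hsum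
        have hysNb : ys ∉ Nb := fun hy => hw (hNbmem' ys hy w rfl)
        have hex : ∃ j, Cm ⟨1⟩ j • yv j ∉ Nb := by
          by_contra hall
          push_neg at hall
          apply hysNb
          have : v ⟨1⟩ = ∑ j, Cm ⟨1⟩ j • yv j := hvv ⟨1⟩
          rw [hv] at this
          simp only [show ((⟨1⟩ : ULift (Fin 2)).down = (0 : Fin 2)) = False from by simp,
            if_false] at this
          rw [show ys = ∑ j, Cm ⟨1⟩ j • yv j from by simpa using this]
          exact Ideal.sum_mem _ fun j _ => hall j
        obtain ⟨j₀, hj₀⟩ := hex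
        set e : ↥D := Cm ⟨1⟩ j₀ with he
        set d : ↥D := Cm ⟨0⟩ j₀ with hd
        have he0 : (e : k) ≠ 0 := by
          intro h0
          apply hj₀
          rw [show e = 0 from Subtype.ext h0, zero_smul]
          exact Nb.zero_mem
        have heNb : Subring.inclusion hDS e ∉ Nb := by
          intro hmem
          apply hj₀
          rw [Algebra.smul_def]
          exact Ideal.mul_mem_right _ _ hmem
        have hcd : (c : k) * (d : k) = (b : k) * (e : k) := by
          have h3 := hrel2 j₀
          have h4 : ∑ i : ULift (Fin 2), f i * Cm i j₀
              = ∑ i : Fin 2, f ⟨i⟩ * Cm ⟨i⟩ j₀ :=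
            (Equiv.ulift.symm.sum_comp fun i => f i * Cm i j₀).symm
          rw [h4, Fin.sum_univ_two] at h3
          simp only [hf] at h3
          norm_num at h3
          have h5 : c * d - b * e = 0 := by
            rw [he, hd]
            linear_combination h3
          have := congrArg (fun x : ↥D => (x : k)) h5
          push_cast at this
          linear_combination this
        have hkey : (e : k) * π (a : T) = (d : k) * π (w : T) := by
          have h6 : (c : k) * ((e : k) * π (a : T) - (d : k) * π (w : T)) = 0 := by
            linear_combination (e : k) * hkey0 - π (w : T) * hcd
          rcases mul_eq_zero.mp h6 with h | h
          · exact absurd h hc0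
          · linear_combination h
        -- lift `e` and `d` to `R`
        obtain ⟨σ, hσ⟩ := hπ (e : k)
        have hσR : σ ∈ R := Subring.mem_comap.mpr (by rw [hσ]; exact e.2)
        obtain ⟨ρ, hρ⟩ := hπ (d : k)
        have hρR : ρ ∈ R := Subring.mem_comap.mpr (by rw [hρ]; exact d.2)
        set σR : ↥R := ⟨σ, hσR⟩ with hσRdef
        set ρR : ↥R := ⟨ρ, hρR⟩ with hρRdef
        have hσA : Subring.inclusion hRA σR ∉ N := by
          intro hmem
          apply heNb
          have h7 : sπ (Subring.inclusion hRA σR) = Subring.inclusion hDS e := by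
            apply Subtype.ext
            show π σ = (e : k)
            exact hσ
          rw [← h7]
          exact hNbmem _ hmem
        have hσq : σR ∈ q.primeCompl := by
          intro hmem
          exact hσA (Ideal.mem_comap.mp hmem)
        -- the error term `μ`
        have hπm : π (σ * (a : T) - ρ * (w : T)) = 0 := by
          rw [map_sub, map_mul, map_mul, hσ, hρ, hkey, sub_self]
        have huσw : IsUnit (σ * (w : T)) := (hunit σ (by rw [hσ]; exact he0)).mul (hunit _ hπw0)
        obtain ⟨u, hu⟩ := huσw
        set μ : T := (↑u⁻¹ : T) * (σ * (a : T) - ρ * (w : T)) with hμ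
        have hπμ : π μ = 0 := by rw [hμ, map_mul, hπm, mul_zero]
        have hμR : μ ∈ R := Subring.mem_comap.mpr (by rw [hπμ]; exact D.zero_mem)
        set μRR : ↥R := ⟨μ, hμR⟩ with hμRRdef
        set ρ₂ : ↥R := ρR + μRR * σR with hρ₂
        refine ⟨(ρ₂, ⟨σR, hσq⟩), ?_⟩
        -- the key identity in `A`
        have hA9 : (Subring.inclusion hRA ρ₂ : ↥A) * w = Subring.inclusion hRA σR * a := by
          apply Subtype.ext
          show (ρ + μ * σ) * (w : T) = σ * (a : T)
          have hμσw : μ * (σ * (w : T)) = σ * (a : T) - ρ * (w : T) := by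
            rw [hμ, ← hu, mul_comm]
            exact u.mul_inv_cancel_left _
          calc (ρ + μ * σ) * (w : T) = ρ * (w : T) + μ * (σ * (w : T)) := by ring
            _ = ρ * (w : T) + (σ * (a : T) - ρ * (w : T)) := by rw [hμσw]
            _ = σ * (a : T) := by ring
        -- conclude in `(Localization.AtPrime N)`
        have hwunit : IsUnit (algebraMap ↥A (Localization.AtPrime N) (w : ↥A)) :=
          hALunits w hw
        rw [← hmk, halgRL, halgRL]
        apply hwunit.mul_right_cancel
        have hspec := IsLocalization.mk'_spec (Localization.AtPrime N) a (⟨w, hw⟩ : N.primeCompl)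
        calc IsLocalization.mk' (Localization.AtPrime N) a (⟨w, hw⟩ : N.primeCompl)
              * algebraMap ↥A (Localization.AtPrime N) (Subring.inclusion hRA σR) * algebraMap ↥A (Localization.AtPrime N) w
            = IsLocalization.mk' (Localization.AtPrime N) a (⟨w, hw⟩ : N.primeCompl) * algebraMap ↥A (Localization.AtPrime N) w
              * algebraMap ↥A (Localization.AtPrime N) (Subring.inclusion hRA σR) := by ring
          _ = algebraMap ↥A (Localization.AtPrime N) a * algebraMap ↥A (Localization.AtPrime N) (Subring.inclusion hRA σR) := by rw [hspec]
          _ = algebraMap ↥A (Localization.AtPrime N) (Subring.inclusion hRA ρ₂ * w) := by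
              rw [← map_mul]
              congr 1
              rw [hA9]
              exact mul_comm _ _
          _ = algebraMap ↥A (Localization.AtPrime N) (Subring.inclusion hRA ρ₂) * algebraMap ↥A (Localization.AtPrime N) w := by
              rw [map_mul]
      · intro r r' hrr'
        refine ⟨1, ?_⟩
        have hle : N.primeCompl ≤ nonZeroDivisors ↥A := fun x hx =>
          mem_nonZeroDivisors_of_ne_zero (fun h0 => hx (h0 ▸ N.zero_mem))
        have hinj : Function.Injective (algebraMap ↥A (Localization.AtPrime N)) :=
          IsLocalization.injective (Localization.AtPrime N) hle
        have h8 : Subring.inclusion hRA r = Subring.inclusion hRA r' := by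
          apply hinj
          rw [← halgRL, ← halgRL, hrr']
        have h9 : (r : T) = (r' : T) := congrArg (Subtype.val : ↥A → T) h8
        rw [Subtype.ext h9]
    exact IsLocalization.flat (Localization.AtPrime N) q.primeCompl
  exact aux_flat_of_max key
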